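/- Let F be a field, k ≥ 2, and work over the field F(λ) of rational functions. Let D(λ) = Σ_{i=0}^{k} D_i φ_i(λ) with D_i ∈ F^{m×m}, let A ∈ F^{n×n}, B ∈ F^{n×m}, C ∈ F^{m×n}, and set G(λ) := D(λ) + C(λI_n − A)^{−1}B ∈ F(λ)^{m×m} (the matrix λI_n − A is invertible over F(λ) since its determinant, the characteristic polynomial of A, is nonzero). Let v ∈ F^k and let L(λ) ∈ F[λ]^{km×km} be a pencil satisfying L(λ)·(Φ_k(λ)⊗I_m) = v ⊗ D(λ). Define Ĝ(λ) := L(λ) + [0_{km×(k−1)m}, (v⊗I_m)·C(λI_n−A)^{−1}B] ∈ F(λ)^{km×km}. Then Ĝ(λ)·(Φ_k(λ)⊗I_m) = (v⊗I_m)·G(λ). -/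
import Mathlib


open Matrix

/-- The column vector `Φ_k(λ) ⊗ I_m` as a `km × m` polynomial matrix. -/
noncomputable def phiKron {F : Type*} [Field F] (φ : ℕ → Polynomial F) (k m : ℕ) :
    Matrix (Fin k × Fin m) (Fin m) (Polynomial F) :=
  Matrix.of fun p j => if p.2 = j then φ (k - 1 - (p.1 : ℕ)) else 0

/-- The matrix `v ⊗ I_m ∈ R^{km×m}` built from a vector `v ∈ R^k`. -/
def vKron {R : Type*} [Semiring R] (k m : ℕ) (v : Fin k → R) :
    Matrix (Fin k × Fin m) (Fin m) R :=
  Matrix.of fun p j => if p.2 = j then v p.1 else 0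

/-- The matrix `(λ I_n − A)⁻¹` over the field of rational functions. -/
noncomputable def lamResolvent {F : Type*} [Field F] {n : ℕ} (A : Matrix (Fin n) (Fin n) F) :
    Matrix (Fin n) (Fin n) (RatFunc F) :=
  (Matrix.diagonal (fun _ => (RatFunc.X : RatFunc F)) - A.map (algebraMap F (RatFunc F)))⁻¹

/-- If `L(λ)` is a pencil with `L(λ)(Φ_k(λ)⊗I_m) = v ⊗ D(λ)` and
`Ĝ(λ) = L(λ) + [0_{km×(k−1)m}, (v⊗I_m)C(λI_n−A)⁻¹B]` is the transfer function of the
associated `𝕄₁`-strong linearization of `G(λ) = D(λ) + C(λI_n−A)⁻¹B`, then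
`Ĝ(λ)(Φ_k(λ)⊗I_m) = (v⊗I_m)G(λ)`. -/
theorem transferFunction_mul_phiKron_M1
    {F : Type*} [Field F] {m n k : ℕ} (hk : 2 ≤ k)
    (α β γ : ℕ → F) (hα : ∀ j, α j ≠ 0)
    (φ : ℕ → Polynomial F) (hφ0 : φ 0 = 1)
    (hrec : ∀ j : ℕ, Polynomial.C (α j) * φ (j + 1)
      = (Polynomial.X - Polynomial.C (β j)) * φ j
        - Polynomial.C (γ j) * (if j = 0 then 0 else φ (j - 1)))
    (D : ℕ → Matrix (Fin m) (Fin m) F)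
    (A : Matrix (Fin n) (Fin n) F) (B : Matrix (Fin n) (Fin m) F)
    (C : Matrix (Fin m) (Fin n) F)
    (G : Matrix (Fin m) (Fin m) (RatFunc F))
    (hG : G = (∑ i ∈ Finset.range (k + 1),
          (D i).map (fun a => φ i * Polynomial.C a)).map (algebraMap (Polynomial F) (RatFunc F))
        + C.map (algebraMap F (RatFunc F)) * lamResolvent A * B.map (algebraMap F (RatFunc F)))
    (v : Fin k → F)
    (L : Matrix (Fin k × Fin m) (Fin k × Fin m) (Polynomial F))
    (hLpencil : ∀ p q, (L p q).natDegree ≤ 1)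
    (hansatz : L * phiKron φ k m
      = vKron k m (fun i => Polynomial.C (v i)) *
          (∑ i ∈ Finset.range (k + 1), (D i).map (fun a => φ i * Polynomial.C a)))
    (Ghat : Matrix (Fin k × Fin m) (Fin k × Fin m) (RatFunc F))
    (hGhat : Ghat = L.map (algebraMap (Polynomial F) (RatFunc F))
      + Matrix.of (fun p q =>
          if (q.1 : ℕ) = k - 1 then
            (vKron k m (fun i => algebraMap F (RatFunc F) (v i)) *
              (C.map (algebraMap F (RatFunc F)) * lamResolvent A *
                B.map (algebraMap F (RatFunc F)))) p q.2
          else 0)) :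
    Ghat * (phiKron φ k m).map (algebraMap (Polynomial F) (RatFunc F))
      = vKron k m (fun i => algebraMap F (RatFunc F) (v i)) * G := by
  
  have hk0 : 0 < k := by omega
  set alg := algebraMap (Polynomial F) (RatFunc F) with halg
  set Dsum := ∑ i ∈ Finset.range (k + 1), (D i).map (fun a => φ i * Polynomial.C a) with hDsum
  set M := C.map (algebraMap F (RatFunc F)) * lamResolvent A * B.map (algebraMap F (RatFunc F))
    with hM
  set vKR := vKron k m (fun i => algebraMap F (RatFunc F) (v i)) with hvKR
  have hvmap : (vKron k m (fun i => Polynomial.C (v i))).map alg = vKR := by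
    ext p j
    by_cases h : p.2 = j <;>
      simp [vKron, h, halg, hvKR, IsScalarTower.algebraMap_apply F (Polynomial F) (RatFunc F),
        Polynomial.algebraMap_eq]
  have hL : L.map alg * (phiKron φ k m).map alg = vKR * Dsum.map alg := by
    rw [← Matrix.map_mul, hansatz, Matrix.map_mul, hvmap]
  have hE : (Matrix.of (fun p (q : Fin k × Fin m) =>
          if (q.1 : ℕ) = k - 1 then (vKR * M) p q.2 else 0))
        * (phiKron φ k m).map alg = vKR * M := by
    ext p j
    rw [Matrix.mul_apply, Fintype.sum_prod_type]
    have hlast : ∀ q1 : Fin k, (q1 : ℕ) = k - 1 ↔ q1 = ⟨k - 1, by omega⟩ := by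
      intro q1
      constructor
      · intro h; exact Fin.ext h
      · intro h; rw [h]
    rw [Finset.sum_eq_single (⟨k - 1, by omega⟩ : Fin k)]
    · have : ∀ q2 : Fin m,
          (Matrix.of (fun p (q : Fin k × Fin m) =>
            if (q.1 : ℕ) = k - 1 then (vKR * M) p q.2 else 0)) p (⟨k - 1, by omega⟩, q2)
            * (phiKron φ k m).map alg (⟨k - 1, by omega⟩, q2) j
          = if q2 = j then (vKR * M) p q2 else 0 := by
        intro q2
        simp only [Matrix.of_apply, phiKron, Matrix.map_apply, apply_ite alg, map_zero]
        simp [hφ0]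
      rw [Finset.sum_congr rfl (fun q2 _ => this q2)]
      simp
    · intro q1 _ hq1
      have : ¬ ((q1 : ℕ) = k - 1) := fun h => hq1 ((hlast q1).1 h)
      simp [this]
    · simp
  calc Ghat * (phiKron φ k m).map alg
      = L.map alg * (phiKron φ k m).map alg
        + (Matrix.of (fun p (q : Fin k × Fin m) =>
            if (q.1 : ℕ) = k - 1 then (vKR * M) p q.2 else 0))
          * (phiKron φ k m).map alg := by
        rw [hGhat, Matrix.add_mul]
    _ = vKR * Dsum.map alg + vKR * M := by rw [hL, hE]
    _ = vKR * G := by rw [hG, Matrix.mul_add]
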